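/- Basic-Step setup: n = r+s, A₁,…,A_m, C are symmetric n×n real matrices with A₁ = fromBlocks(D,0,0,0) for an r×r positive definite matrix D, and b ∈ ℝᵐ with b₁ = 0. Suppose X* is feasible for (P) (X* ⪰ 0, Aᵢ • X* = bᵢ for all i), y* is feasible for (D) (C − Σᵢ yᵢ*Aᵢ ⪰ 0), and C • X* = Σᵢ bᵢyᵢ* (zero duality gap with attainment). Then for every (ỹ₂,…,ỹ_m) feasible for (D_pre) one has Σ_{i=2}^m bᵢỹᵢ ≤ Σ_{i=1}^m bᵢyᵢ*. In particular the truncation (y₂*,…,y_m*) is an optimal solution of (D_pre), so when strong duality holds, the Sieve-SDP reduction changes neither the primal nor the dual optimal value. -/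

import Mathlib

open Matrix

theorem posSemidef_iff_eq_transpose_mul_self {n : Type*} [Fintype n] [DecidableEq n]
    {A : Matrix n n ℝ} : A.PosSemidef ↔ ∃ B : Matrix n n ℝ, A = Bᴴ * B := by
  open scoped MatrixOrder in
  exact ⟨fun h => CStarAlgebra.nonneg_iff_eq_star_mul_self.mp h.nonneg,
    fun ⟨B, hB⟩ => hB ▸ posSemidef_conjTranspose_mul_self B⟩

lemma psd_diag_nonneg {n : Type*} [Fintype n] [DecidableEq n]
    {M : Matrix n n ℝ} (hM : M.PosSemidef) (i : n) : 0 ≤ M i i := by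
  have := hM.dotProduct_mulVec_nonneg (Pi.single i 1)
  simpa [mulVec_single, single_dotProduct] using this

lemma psd_trace_nonneg {n : Type*} [Fintype n] [DecidableEq n]
    {M : Matrix n n ℝ} (hM : M.PosSemidef) : 0 ≤ M.trace :=
  Finset.sum_nonneg fun i _ => psd_diag_nonneg hM i

lemma trace_mul_psd_nonneg {n : Type*} [Fintype n] [DecidableEq n]
    {M N : Matrix n n ℝ} (hM : M.PosSemidef) (hN : N.PosSemidef) :
    0 ≤ (M * N).trace := by
  obtain ⟨P, rfl⟩ := posSemidef_iff_eq_transpose_mul_self.mp hM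
  obtain ⟨Q, rfl⟩ := posSemidef_iff_eq_transpose_mul_self.mp hN
  have h : (Pᴴ * P * (Qᴴ * Q)).trace = ((P * Qᴴ)ᴴ * (P * Qᴴ)).trace := by
    rw [show Pᴴ * P * (Qᴴ * Q) = (Pᴴ * P * Qᴴ) * Q by
      simp only [Matrix.mul_assoc], trace_mul_comm]
    rw [conjTranspose_mul, conjTranspose_conjTranspose]
    simp only [Matrix.mul_assoc]
  rw [h]
  exact psd_trace_nonneg (posSemidef_conjTranspose_mul_self _)

lemma psd_row_zero {n : Type*} [Fintype n] [DecidableEq n]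
    {M : Matrix n n ℝ} (hM : M.PosSemidef) {i : n} (h : M i i = 0) (j : n) :
    M i j = 0 ∧ M j i = 0 := by
  have hz : M *ᵥ Pi.single i 1 = 0 := by
    rw [← hM.dotProduct_mulVec_zero_iff]
    simpa [mulVec_single, single_dotProduct] using h
  have hcol : M j i = 0 := by
    have := congrFun hz j
    simpa [mulVec_single] using this
  refine ⟨?_, hcol⟩
  have hs : M i j = M j i := by
    have := congrFun (congrFun hM.1 i) j
    simpa [conjTranspose_apply] using this.symm
  rw [hs]; exact hcol

lemma posdef_trace_mul_eq_zero {r : ℕ} {D : Matrix (Fin r) (Fin r) ℝ} (hD : D.PosDef)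
    {P : Matrix (Fin r) (Fin r) ℝ} (hP : P.PosSemidef) (h : (D * P).trace = 0) : P = 0 := by
  obtain ⟨B, rfl⟩ := posSemidef_iff_eq_transpose_mul_self.mp hP
  have htr : (D * (Bᴴ * B)).trace = (B * (D * Bᴴ)).trace := by
    rw [← Matrix.mul_assoc, trace_mul_comm]
  have hdiag : ∀ k, (B * (D * Bᴴ)) k k = star (B k) ⬝ᵥ D *ᵥ (B k) := by
    intro k
    simp [Matrix.mul_apply, conjTranspose_apply, dotProduct, mulVec, Finset.mul_sum,
      mul_comm, mul_left_comm]
  have hB : B = 0 := by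
    ext k j
    by_contra hkj
    have hk : B k ≠ 0 := by
      intro h0; exact hkj (by rw [h0]; rfl)
    have hpos : 0 < (B * (D * Bᴴ)) k k := by rw [hdiag]; exact hD.dotProduct_mulVec_pos hk
    have hnonneg : ∀ i ∈ Finset.univ, 0 ≤ (B * (D * Bᴴ)) i i := by
      intro i _
      rw [hdiag]; exact (hD.posSemidef).dotProduct_mulVec_nonneg _
    have hsum : ∑ i, (B * (D * Bᴴ)) i i = 0 := by
      rw [show ∑ i, (B * (D * Bᴴ)) i i = (B * (D * Bᴴ)).trace from rfl, ← htr]; exact h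
    have := (Finset.sum_eq_zero_iff_of_nonneg hnonneg).mp hsum k (Finset.mem_univ k)
    exact absurd this (ne_of_gt hpos)
  rw [hB]; simp

lemma trace_fromBlocks_mul {r s : ℕ} (D : Matrix (Fin r) (Fin r) ℝ)
    (X : Matrix (Fin r ⊕ Fin s) (Fin r ⊕ Fin s) ℝ) :
    (fromBlocks D 0 0 0 * X).trace = (D * X.toBlocks₁₁).trace := by
  simp [trace, diag, Matrix.mul_apply, Fintype.sum_sum_type, fromBlocks, toBlocks₁₁]

lemma trace_mul_blocks {r s : ℕ}
    (M X : Matrix (Fin r ⊕ Fin s) (Fin r ⊕ Fin s) ℝ)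
    (hrow : ∀ a j, X (Sum.inl a) j = 0) (hcol : ∀ j a, X j (Sum.inl a) = 0) :
    (M * X).trace = (M.toBlocks₂₂ * X.toBlocks₂₂).trace := by
  simp [trace, diag, Matrix.mul_apply, Fintype.sum_sum_type, toBlocks₂₂, hrow, hcol]

/-- Under strong duality with attainment, the Sieve-SDP reduction changes neither the
primal nor the dual optimal value: every (D_pre)-feasible `z` has objective value at
most `Σ bᵢ yᵢ*`, and the truncation of `y*` is an optimal solution of (D_pre). -/
theorem sieve_strong_duality_preserved (r s m : ℕ)
    (A : Fin (m + 1) → Matrix (Fin r ⊕ Fin s) (Fin r ⊕ Fin s) ℝ)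
    (hA : ∀ i, (A i).IsSymm)
    (C : Matrix (Fin r ⊕ Fin s) (Fin r ⊕ Fin s) ℝ) (hC : C.IsSymm)
    (D : Matrix (Fin r) (Fin r) ℝ) (hD : D.PosDef)
    (hA0 : A 0 = fromBlocks D 0 0 0)
    (b : Fin (m + 1) → ℝ) (hb0 : b 0 = 0)
    (Xstar : Matrix (Fin r ⊕ Fin s) (Fin r ⊕ Fin s) ℝ) (hXstar : Xstar.PosSemidef)
    (hXfeas : ∀ i, (A i * Xstar).trace = b i)
    (ystar : Fin (m + 1) → ℝ) (hystar : (C - ∑ i, ystar i • A i).PosSemidef)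
    (hgap : (C * Xstar).trace = ∑ i, b i * ystar i) :
    (∀ z : Fin m → ℝ, ((C - ∑ i : Fin m, z i • A i.succ).toBlocks₂₂).PosSemidef →
        ∑ i : Fin m, b i.succ * z i ≤ ∑ i, b i * ystar i) ∧
    ((C - ∑ i : Fin m, ystar i.succ • A i.succ).toBlocks₂₂).PosSemidef ∧
    (∀ z : Fin m → ℝ, ((C - ∑ i : Fin m, z i • A i.succ).toBlocks₂₂).PosSemidef →
        ∑ i : Fin m, b i.succ * z i ≤ ∑ i : Fin m, b i.succ * ystar i.succ) := by
  have hA0X : (A 0 * Xstar).trace = 0 := by rw [hXfeas 0, hb0]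
  have hX11psd : (Xstar.toBlocks₁₁).PosSemidef :=
    hXstar.submatrix (Sum.inl : Fin r → Fin r ⊕ Fin s)
  have hX11 : Xstar.toBlocks₁₁ = 0 :=
    posdef_trace_mul_eq_zero hD hX11psd
      (by rw [← trace_fromBlocks_mul, ← hA0]; exact hA0X)
  have hdiag0 : ∀ a, Xstar (Sum.inl a) (Sum.inl a) = 0 := fun a =>
    congrFun (congrFun hX11 a) a
  have hrow : ∀ a j, Xstar (Sum.inl a) j = 0 := fun a j =>
    (psd_row_zero hXstar (hdiag0 a) j).1
  have hcol : ∀ j a, Xstar j (Sum.inl a) = 0 := fun j a =>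
    (psd_row_zero hXstar (hdiag0 a) j).2
  have hX22psd : (Xstar.toBlocks₂₂).PosSemidef :=
    hXstar.submatrix (Sum.inr : Fin s → Fin r ⊕ Fin s)
  have key : ∀ z : Fin m → ℝ, ((C - ∑ i : Fin m, z i • A i.succ).toBlocks₂₂).PosSemidef →
      ∑ i : Fin m, b i.succ * z i ≤ ∑ i, b i * ystar i := by
    intro z hz
    set N := C - ∑ i : Fin m, z i • A i.succ with hN
    have h1 : 0 ≤ (N.toBlocks₂₂ * Xstar.toBlocks₂₂).trace := trace_mul_psd_nonneg hz hX22psd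
    have h2 : (N * Xstar).trace = (C * Xstar).trace - ∑ i : Fin m, z i * b i.succ := by
      rw [hN, sub_mul, trace_sub, Finset.sum_mul, trace_sum]
      congr 1
      refine Finset.sum_congr rfl fun i _ => ?_
      rw [smul_mul_assoc, trace_smul, hXfeas, smul_eq_mul]
    have h3 := trace_mul_blocks N Xstar hrow hcol
    have h4 : 0 ≤ (C * Xstar).trace - ∑ i : Fin m, z i * b i.succ := by
      rw [← h2, h3]; exact h1
    rw [hgap] at h4
    have h5 := sub_nonneg.mp h4
    calc ∑ i : Fin m, b i.succ * z i = ∑ i : Fin m, z i * b i.succ := by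
          exact Finset.sum_congr rfl fun i _ => mul_comm _ _
      _ ≤ ∑ i, b i * ystar i := h5
  have hSblocks : (C - ∑ i : Fin m, ystar i.succ • A i.succ).toBlocks₂₂ =
      (C - ∑ i, ystar i • A i).toBlocks₂₂ := by
    rw [Fin.sum_univ_succ, hA0]
    ext i j
    simp [toBlocks₂₂, fromBlocks, Matrix.sub_apply, Matrix.sum_apply]
  have hpart2 : ((C - ∑ i : Fin m, ystar i.succ • A i.succ).toBlocks₂₂).PosSemidef := by
    rw [hSblocks]
    exact hystar.submatrix (Sum.inr : Fin s → Fin r ⊕ Fin s)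
  have hsum : ∑ i, b i * ystar i = ∑ i : Fin m, b i.succ * ystar i.succ := by
    rw [Fin.sum_univ_succ, hb0]; ring
  exact ⟨key, hpart2, fun z hz => hsum ▸ key z hz⟩
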